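/- Let X be a nonnegative random variable with support (0, r), r ∈ (0, ∞], with 0 < E[X] < ∞ and F(x) > 0 for all x > 0, and let α > 0, β > 0 be such that G_X(α, β) < ∞. Then G_X(α, β) = Σ_{n=0}^∞ C(α, n) (−1)^n (E[X])^{n+β} · 𝒢_e(n+β), where C(α, n) = α(α−1)···(α−n+1)/n! is the generalized binomial coefficient and 𝒢_e(ν) = ∫_0^r (F̄(x)/E[X])^ν dx is the information generating function of the equilibrium density f_e(x) = F̄(x)/E[X]. -/

import Mathlib

open MeasureTheory ProbabilityTheory Set

/-- The (essential) support interval of a CDF `F`: the set where `0 < F x < 1`,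
which coincides (up to endpoints) with the interval `(l, r)` where
`l = inf {x : F x > 0}` and `r = sup {x : 1 - F x > 0}`. -/
def cigfSupport (F : ℝ → ℝ) : Set ℝ := {x | 0 < F x ∧ F x < 1}

/-- The cumulative information generating function
`G_X(α, β) = ∫_l^r F(x)^α (1 - F(x))^β dx`. -/
noncomputable def cigf (F : ℝ → ℝ) (α β : ℝ) : ℝ :=
  ∫ x in cigfSupport F, F x ^ α * (1 - F x) ^ β

/-- `(α, β) ∈ D_X`, i.e. `G_X(α, β) < ∞`. -/
def memD (F : ℝ → ℝ) (α β : ℝ) : Prop :=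
  IntegrableOn (fun x => F x ^ α * (1 - F x) ^ β) (cigfSupport F)

/-- The CDF of a random variable `X` under the probability measure `P`. -/
noncomputable def rvCDF {Ω : Type*} [MeasurableSpace Ω] (P : Measure Ω) (X : Ω → ℝ) (x : ℝ) : ℝ :=
  (P {ω | X ω ≤ x}).toReal

/-- The CDF of a probability measure on `ℝ`. -/
noncomputable def cdfOf (μ : Measure ℝ) (x : ℝ) : ℝ := (μ (Iic x)).toReal

/-- The generalized binomial coefficient `C(a, n) = a(a-1)⋯(a-n+1)/n!`. -/
noncomputable def genBinom (a : ℝ) (n : ℕ) : ℝ :=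
  (∏ i ∈ Finset.range n, (a - i)) / (n.factorial : ℝ)

open scoped ENNReal NNReal

lemma genBinom_zero (a : ℝ) : genBinom a 0 = 1 := by simp [genBinom]

lemma genBinom_succ (a : ℝ) (n : ℕ) :
    genBinom a (n + 1) = genBinom a n * ((a - n) / (n + 1)) := by
  have h1 : (n.factorial : ℝ) ≠ 0 := Nat.cast_ne_zero.mpr n.factorial_ne_zero
  have h2 : ((n : ℝ) + 1) ≠ 0 := by positivity
  simp only [genBinom, Finset.prod_range_succ, Nat.factorial_succ]
  push_cast
  rw [div_mul_div_comm, mul_comm ((n:ℝ) + 1) (n.factorial : ℝ)]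

lemma abs_genBinom_le (a : ℝ) (m : ℕ) (ham : |a| ≤ m) :
    ∀ n, |genBinom a n| ≤ ((n : ℝ) + 1) ^ m := by
  intro n
  induction n with
  | zero => simp [genBinom]
  | succ n ih =>
    have hn1 : (0 : ℝ) < (n : ℝ) + 1 := by positivity
    have h1 : |a - n| ≤ (m : ℝ) + n := by
      calc |a - n| ≤ |a| + |(n : ℝ)| := abs_sub a n
        _ ≤ (m : ℝ) + n := by
            rw [Nat.abs_cast]
            exact add_le_add ham le_rfl
    have hber : 1 + (m : ℝ) * (1 / ((n : ℝ) + 1)) ≤ (1 + 1 / ((n : ℝ) + 1)) ^ m := by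
      refine one_add_mul_le_pow ?_ m
      have : (0:ℝ) ≤ 1 / ((n : ℝ) + 1) := by positivity
      linarith
    have hkey : ((n : ℝ) + 1) ^ m * (((m : ℝ) + n) / ((n : ℝ) + 1)) ≤ ((n : ℝ) + 2) ^ m := by
      have h2 : ((n : ℝ) + 1) ^ m * (((m : ℝ) + n) / ((n : ℝ) + 1))
          ≤ ((n : ℝ) + 1) ^ m * (1 + (m : ℝ) * (1 / ((n : ℝ) + 1))) := by
        apply mul_le_mul_of_nonneg_left _ (by positivity)
        rw [div_le_iff₀ hn1]
        field_simp
        ring_nf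
        nlinarith [hn1]
      have h3 : ((n : ℝ) + 1) ^ m * (1 + 1 / ((n : ℝ) + 1)) ^ m = ((n : ℝ) + 2) ^ m := by
        rw [← mul_pow]
        congr 1
        field_simp
        ring
      calc ((n : ℝ) + 1) ^ m * (((m : ℝ) + n) / ((n : ℝ) + 1))
          ≤ ((n : ℝ) + 1) ^ m * (1 + (m : ℝ) * (1 / ((n : ℝ) + 1))) := h2
        _ ≤ ((n : ℝ) + 1) ^ m * (1 + 1 / ((n : ℝ) + 1)) ^ m := by
            apply mul_le_mul_of_nonneg_left hber (by positivity)
        _ = ((n : ℝ) + 2) ^ m := h3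
    rw [genBinom_succ, abs_mul, abs_div]
    have habs : |(n : ℝ) + 1| = (n : ℝ) + 1 := abs_of_pos hn1
    rw [habs]
    calc |genBinom a n| * (|a - n| / ((n : ℝ) + 1))
        ≤ ((n : ℝ) + 1) ^ m * (((m : ℝ) + n) / ((n : ℝ) + 1)) := by
          exact mul_le_mul ih (by gcongr) (by positivity) (by positivity)
      _ ≤ ((n : ℝ) + 2) ^ m := hkey
      _ = ((↑(n + 1) : ℝ) + 1) ^ m := by push_cast; ring

lemma summable_poly_geom (m : ℕ) {r : ℝ} (hr : |r| < 1) :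
    Summable (fun n : ℕ => ((n : ℝ) + 1) ^ m * r ^ n) := by
  have h : Summable (fun n : ℕ => (n : ℝ) ^ m * |r| ^ n) :=
    summable_pow_mul_geometric_of_norm_lt_one m (by rwa [Real.norm_eq_abs, abs_abs])
  apply Summable.of_norm_bounded_eventually_nat (g := fun n => (2:ℝ) ^ m * ((n : ℝ) ^ m * |r| ^ n))
    (h.mul_left _)
  filter_upwards [Filter.eventually_ge_atTop 1] with n hn
  have hn1 : (1:ℝ) ≤ (n:ℝ) := by exact_mod_cast hn
  rw [Real.norm_eq_abs, abs_mul, abs_pow, abs_pow, abs_of_nonneg (by positivity : (0:ℝ) ≤ (n:ℝ)+1)]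
  have : ((n:ℝ) + 1) ^ m ≤ (2 * (n:ℝ)) ^ m := by
    apply pow_le_pow_left₀ (by positivity)
    linarith
  calc ((n:ℝ)+1)^m * |r|^n ≤ (2*(n:ℝ))^m * |r|^n := by
        exact mul_le_mul_of_nonneg_right this (by positivity)
    _ = 2^m * ((n:ℝ)^m * |r|^n) := by rw [mul_pow]; ring

lemma summable_genBinom_mul_pow (a : ℝ) {x : ℝ} (hx : |x| < 1) :
    Summable (fun n : ℕ => genBinom a n * x ^ n) := by
  set m := Nat.ceil |a| with hm
  refine Summable.of_norm_bounded (g := fun n => ((n : ℝ) + 1) ^ m * |x| ^ n)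
    (summable_poly_geom m (by rwa [abs_abs])) (fun n => ?_)
  rw [Real.norm_eq_abs, abs_mul, abs_pow]
  exact mul_le_mul_of_nonneg_right (abs_genBinom_le a m (Nat.le_ceil _) n) (by positivity)

lemma summable_genBinom_deriv (a : ℝ) {x : ℝ} (hx : |x| < 1) :
    Summable (fun n : ℕ => genBinom a n * ((n : ℝ) * x ^ (n - 1))) := by
  set m := Nat.ceil |a| with hm
  set ρ : ℝ := (|x| + 1) / 2 with hρ
  have hxρ : |x| ≤ ρ := by rw [hρ]; linarith
  have hρ1 : ρ < 1 := by rw [hρ]; linarith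
  have hρ0 : 0 < ρ := by rw [hρ]; positivity
  refine Summable.of_norm_bounded (g := fun n => (1/ρ) * (((n : ℝ) + 1) ^ (m+1) * ρ ^ n))
    ((summable_poly_geom (m+1) (by rwa [abs_of_pos hρ0])).mul_left _) (fun n => ?_)
  rw [Real.norm_eq_abs, abs_mul, abs_mul, abs_pow, Nat.abs_cast]
  have h1 : |genBinom a n| * ((n:ℝ) * |x| ^ (n-1)) ≤ ((n:ℝ)+1)^m * (((n:ℝ)+1) * ρ ^ (n-1)) := by
    apply mul_le_mul (abs_genBinom_le a m (Nat.le_ceil _) n)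
    · exact mul_le_mul (by linarith) (pow_le_pow_left₀ (abs_nonneg x) hxρ _) (by positivity)
        (by positivity)
    · positivity
    · positivity
  have h2 : ρ ^ (n - 1) ≤ ρ ^ n / ρ := by
    cases n with
    | zero =>
      simp only [pow_zero]
      rw [le_div_iff₀ hρ0]
      simpa using hρ1.le
    | succ k =>
      simp only [Nat.add_sub_cancel, pow_succ]
      rw [mul_div_assoc, div_self hρ0.ne']
      simp
  calc |genBinom a n| * ((n:ℝ) * |x| ^ (n-1))
      ≤ ((n:ℝ)+1)^m * (((n:ℝ)+1) * ρ ^ (n-1)) := h1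
    _ ≤ ((n:ℝ)+1)^m * (((n:ℝ)+1) * (ρ ^ n / ρ)) := by
        exact mul_le_mul_of_nonneg_left (mul_le_mul_of_nonneg_left h2 (by positivity))
          (by positivity)
    _ = (1/ρ) * (((n:ℝ)+1)^(m+1) * ρ ^ n) := by rw [pow_succ]; field_simp

lemma hasSum_genBinom (a : ℝ) {t : ℝ} (ht : |t| < 1) :
    HasSum (fun n : ℕ => genBinom a n * t ^ n) ((1 + t) ^ a) := by
  obtain ⟨ht1, ht2⟩ := abs_lt.mp ht
  set m := Nat.ceil |a| with hm
  set S : ℝ → ℝ := fun x => ∑' n : ℕ, genBinom a n * x ^ n with hS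
  -- derivative of S
  have hderiv : ∀ x ∈ Ioo (-1:ℝ) 1,
      HasDerivAt S (∑' n : ℕ, genBinom a n * ((n : ℝ) * x ^ (n - 1))) x := by
    intro x hx
    have hxabs : |x| < 1 := abs_lt.mpr hx
    set ρ : ℝ := (|x| + 1) / 2 with hρ
    have hxρ : |x| < ρ := by rw [hρ]; linarith
    have hρ1 : ρ < 1 := by rw [hρ]; linarith
    have hρ0 : 0 < ρ := by rw [hρ]; positivity
    have hxmem : x ∈ Ioo (-ρ) ρ := by
      constructor <;> [linarith [neg_abs_le x]; linarith [le_abs_self x]]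
    refine hasDerivAt_tsum_of_isPreconnected
      (u := fun n : ℕ => (1/ρ) * (((n : ℝ) + 1) ^ (m+1) * ρ ^ n))
      ((summable_poly_geom (m+1) (by rwa [abs_of_pos hρ0])).mul_left _)
      isOpen_Ioo (convex_Ioo _ _).isPreconnected
      (fun n y _ => (hasDerivAt_pow n y).const_mul (genBinom a n))
      (fun n y hy => ?_) hxmem (summable_genBinom_mul_pow a hxabs) hxmem
    have hyρ : |y| ≤ ρ := (abs_lt.mpr ⟨hy.1, hy.2⟩).le
    rw [Real.norm_eq_abs, abs_mul, abs_mul, abs_pow, Nat.abs_cast]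
    have h2 : ρ ^ (n - 1) ≤ ρ ^ n / ρ := by
      cases n with
      | zero =>
        simp only [pow_zero]
        rw [le_div_iff₀ hρ0]
        simpa using hρ1.le
      | succ k =>
        simp only [Nat.add_sub_cancel, pow_succ]
        rw [mul_div_assoc, div_self hρ0.ne']
        simp
    calc |genBinom a n| * ((n:ℝ) * |y| ^ (n-1))
        ≤ ((n:ℝ)+1)^m * (((n:ℝ)+1) * ρ ^ (n-1)) := by
          apply mul_le_mul (abs_genBinom_le a m (Nat.le_ceil _) n)
          · exact mul_le_mul (by linarith) (pow_le_pow_left₀ (abs_nonneg y) hyρ _) (by positivity)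
              (by positivity)
          · positivity
          · positivity
      _ ≤ ((n:ℝ)+1)^m * (((n:ℝ)+1) * (ρ ^ n / ρ)) := by
          exact mul_le_mul_of_nonneg_left (mul_le_mul_of_nonneg_left h2 (by positivity))
            (by positivity)
      _ = (1/ρ) * (((n:ℝ)+1)^(m+1) * ρ ^ n) := by rw [pow_succ]; field_simp
  -- the ODE
  have hODE : ∀ x ∈ Ioo (-1:ℝ) 1,
      (1 + x) * (∑' n : ℕ, genBinom a n * ((n : ℝ) * x ^ (n - 1))) = a * S x := by
    intro x hx
    have hxabs : |x| < 1 := abs_lt.mpr hx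
    have hA : HasSum (fun n : ℕ => genBinom a n * x ^ n) (S x) :=
      (summable_genBinom_mul_pow a hxabs).hasSum
    set D := ∑' n : ℕ, genBinom a n * ((n : ℝ) * x ^ (n - 1)) with hD
    have hDs : HasSum (fun n : ℕ => genBinom a n * ((n : ℝ) * x ^ (n - 1))) D :=
      (summable_genBinom_deriv a hxabs).hasSum
    have h3 : HasSum (fun n : ℕ => genBinom a n * ((n : ℝ) * x ^ (n - 1)))
        (D + ∑ i ∈ Finset.range 1, genBinom a i * ((i : ℝ) * x ^ (i - 1))) := by
      simpa using hDs
    have hD1 : HasSum (fun n : ℕ => genBinom a (n+1) * (((n : ℝ) + 1) * x ^ n)) D := by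
      have h2 := (hasSum_nat_add_iff
        (f := fun n : ℕ => genBinom a n * ((n : ℝ) * x ^ (n - 1))) 1).mpr h3
      simpa using h2
    have h4 : HasSum (fun n : ℕ => ((n:ℝ) + 1) * genBinom a (n+1) * x ^ (n+1)) (D * x) := by
      have h5 := hD1.mul_right x
      have e : (fun n : ℕ => ((n:ℝ) + 1) * genBinom a (n+1) * x ^ (n+1))
          = fun n : ℕ => genBinom a (n+1) * (((n : ℝ) + 1) * x ^ n) * x := by
        funext n; ring
      rw [e]; exact h5
    have h5 : HasSum (fun n : ℕ => (n:ℝ) * genBinom a n * x ^ n) (D * x) := by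
      have h4' : HasSum (fun n : ℕ => ((↑(n+1):ℝ)) * genBinom a (n+1) * x ^ (n+1)) (D * x) := by
        simpa using h4
      have := (hasSum_nat_add_iff
        (f := fun n : ℕ => (n:ℝ) * genBinom a n * x ^ n) 1).mp h4'
      simpa using this
    have h6 := hD1.add h5
    have h7 : (fun n : ℕ => genBinom a (n+1) * (((n : ℝ) + 1) * x ^ n)
        + (n:ℝ) * genBinom a n * x ^ n) = fun n : ℕ => a * (genBinom a n * x ^ n) := by
      funext n
      have hne : ((n:ℝ) + 1) ≠ 0 := by positivity
      have hrec : genBinom a (n+1) * ((n:ℝ) + 1) = (a - n) * genBinom a n := by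
        rw [genBinom_succ]; field_simp
      calc genBinom a (n+1) * (((n : ℝ) + 1) * x ^ n) + (n:ℝ) * genBinom a n * x ^ n
          = genBinom a (n+1) * ((n:ℝ) + 1) * x ^ n + (n:ℝ) * genBinom a n * x ^ n := by ring
        _ = (a - n) * genBinom a n * x ^ n + (n:ℝ) * genBinom a n * x ^ n := by rw [hrec]
        _ = a * (genBinom a n * x ^ n) := by ring
    rw [h7] at h6
    have h8 : HasSum (fun n : ℕ => a * (genBinom a n * x ^ n)) (a * S x) := hA.mul_left a
    have h9 : D + D * x = a * S x := h6.unique h8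
    linarith [h9]
  -- constancy of S x * (1+x)^(-a)
  set h : ℝ → ℝ := fun y => S y * (1 + y) ^ (-a) with hh_def
  have hh : ∀ y ∈ Ioo (-1:ℝ) 1, HasDerivAt h 0 y := by
    intro y hy
    have h1y : 0 < 1 + y := by linarith [hy.1]
    have hd1 := hderiv y hy
    have hd2 : HasDerivAt (fun z : ℝ => (1 + z) ^ (-a)) (-a * (1 + y) ^ (-a - 1)) y := by
      have h3 : HasDerivAt (fun z : ℝ => 1 + z) 1 y := by
        simpa using (hasDerivAt_id y).const_add 1
      have h4 : HasDerivAt (fun u : ℝ => u ^ (-a)) (-a * (1 + y) ^ (-a - 1)) (1 + y) :=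
        Real.hasDerivAt_rpow_const (Or.inl h1y.ne')
      have h5 := h4.comp y h3
      rw [mul_one] at h5
      exact h5
    have hmul := hd1.mul hd2
    have hval : (∑' n : ℕ, genBinom a n * ((n : ℝ) * y ^ (n - 1))) * (1 + y) ^ (-a)
        + S y * (-a * (1 + y) ^ (-a - 1)) = 0 := by
      have hpow : (1 + y) ^ (-a) = (1 + y) ^ (-a - 1) * (1 + y) := by
        rw [← Real.rpow_add_one h1y.ne' (-a - 1)]
        ring_nf
      rw [hpow]
      linear_combination ((1 + y) ^ (-a - 1)) * (hODE y hy)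
    rw [hval] at hmul
    exact hmul
  have hS0 : S 0 = 1 := by
    rw [show S 0 = ∑' n : ℕ, genBinom a n * (0:ℝ) ^ n from rfl]
    have : ∀ n : ℕ, n ≠ 0 → genBinom a n * (0:ℝ) ^ n = 0 := by
      intro n hn; rw [zero_pow hn, mul_zero]
    rw [tsum_eq_single 0 this, genBinom_zero, pow_zero, mul_one]
  have hh0 : h 0 = 1 := by
    rw [hh_def]; simp [hS0]
  have hmem : ∀ y ∈ Icc (min 0 t) (max 0 t), y ∈ Ioo (-1:ℝ) 1 := by
    intro y hy
    rcases le_total 0 t with h' | h'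
    · rw [min_eq_left h', max_eq_right h'] at hy
      exact ⟨by linarith [hy.1], by linarith [hy.2]⟩
    · rw [min_eq_right h', max_eq_left h'] at hy
      exact ⟨by linarith [hy.1], by linarith [hy.2]⟩
  have hcont : ContinuousOn h (Icc (min 0 t) (max 0 t)) := fun y hy =>
    ((hh y (hmem y hy)).continuousAt).continuousWithinAt
  have hconst : h t = h 0 := by
    rcases le_total 0 t with h' | h'
    · have := constant_of_has_deriv_right_zero
        (f := h) (a := 0) (b := t)
        (by rw [min_eq_left h', max_eq_right h'] at hcont; exact hcont)
        (fun y hy => (hh y (hmem y (by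
          rw [min_eq_left h', max_eq_right h']; exact ⟨hy.1, hy.2.le⟩))).hasDerivWithinAt)
      exact this t (by constructor <;> [exact h'; exact le_rfl])
    · have := constant_of_has_deriv_right_zero
        (f := h) (a := t) (b := 0)
        (by rw [min_eq_right h', max_eq_left h'] at hcont; exact hcont)
        (fun y hy => (hh y (hmem y (by
          rw [min_eq_right h', max_eq_left h']; exact ⟨hy.1, hy.2.le⟩))).hasDerivWithinAt)
      exact (this 0 (by constructor <;> [exact h'; exact le_rfl])).symm
  have h1t : (0:ℝ) < 1 + t := by linarith
  have hfinal : S t = (1 + t) ^ a := by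
    have h2 : S t * (1 + t) ^ (-a) = 1 := by
      rw [show S t * (1 + t) ^ (-a) = h t from rfl, hconst, hh0]
    have h3 : (1 + t) ^ (-a) * (1 + t) ^ a = 1 := by
      rw [← Real.rpow_add h1t]; simp
    calc S t = S t * ((1 + t) ^ (-a) * (1 + t) ^ a) := by rw [h3, mul_one]
      _ = (S t * (1 + t) ^ (-a)) * (1 + t) ^ a := by ring
      _ = (1 + t) ^ a := by rw [h2, one_mul]
  have := (summable_genBinom_mul_pow a ht).hasSum
  rwa [show (∑' n : ℕ, genBinom a n * t ^ n) = S t from rfl, hfinal] at this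

lemma summable_abs_genBinom {a : ℝ} (ha : 0 < a) :
    Summable (fun n : ℕ => |genBinom a n|) := by
  set N := Nat.ceil a with hN
  have haN : a ≤ (N : ℝ) := Nat.le_ceil a
  rw [← summable_nat_add_iff N]
  set b : ℕ → ℝ := fun k => |genBinom a (k + N)| with hb
  have hbnn : ∀ k, 0 ≤ b k := fun k => abs_nonneg _
  have hrec : ∀ k : ℕ, ((k : ℝ) + N + 1) * b (k + 1) = (((k : ℝ) + N) - a) * b k := by
    intro k
    have hkN : a ≤ (k : ℝ) + N := by
      have : (0:ℝ) ≤ (k:ℝ) := by positivity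
      linarith
    have hpos : (0:ℝ) < (k : ℝ) + N + 1 := by linarith [ha.trans_le hkN]
    have h1 : genBinom a (k + N + 1) = genBinom a (k + N) * ((a - ((k:ℝ) + N)) / ((k:ℝ) + N + 1)) := by
      have := genBinom_succ a (k + N)
      push_cast at this
      convert this using 3 <;> push_cast <;> ring
    have h2 : b (k + 1) = |genBinom a (k + N)| * ((((k:ℝ) + N) - a) / ((k:ℝ) + N + 1)) := by
      show |genBinom a (k + 1 + N)| = _
      have he : k + 1 + N = k + N + 1 := by omega
      rw [he, h1, abs_mul, abs_div, abs_of_pos hpos, abs_sub_comm,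
        abs_of_nonneg (by linarith : (0:ℝ) ≤ ((k:ℝ) + N) - a)]
    rw [h2]
    have : b k = |genBinom a (k + N)| := rfl
    rw [this]
    field_simp
  apply summable_of_sum_range_le (c := ((N:ℝ) * b 0) / a) hbnn
  intro M
  have key : ∀ k : ℕ, a * b k = ((k:ℝ) + N) * b k - (((k+1 : ℕ):ℝ) + N) * b (k + 1) := by
    intro k
    have := hrec k
    push_cast
    linarith [this]
  have htel : ∑ k ∈ Finset.range M, a * b k = ((0:ℝ) + N) * b 0 - ((M:ℝ) + N) * b M := by
    calc ∑ k ∈ Finset.range M, a * b k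
        = ∑ k ∈ Finset.range M, ((fun k : ℕ => ((k:ℝ) + N) * b k) k
            - (fun k : ℕ => ((k:ℝ) + N) * b k) (k + 1)) := by
          refine Finset.sum_congr rfl (fun k _ => ?_)
          simpa using key k
      _ = ((0:ℝ) + N) * b 0 - ((M:ℝ) + N) * b M := by
          rw [Finset.sum_range_sub' (f := fun k : ℕ => ((k:ℝ) + N) * b k) M]
          norm_num
  have hMb : 0 ≤ ((M:ℝ) + N) * b M := by
    have : (0:ℝ) ≤ (M:ℝ) + N := by positivity
    exact mul_nonneg this (hbnn M)
  have h2 : a * ∑ k ∈ Finset.range M, b k ≤ (N:ℝ) * b 0 := by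
    rw [Finset.mul_sum]
    rw [htel]
    simp only [zero_add]
    linarith
  rw [le_div_iff₀ ha]
  calc (∑ k ∈ Finset.range M, b k) * a = a * ∑ k ∈ Finset.range M, b k := by ring
    _ ≤ (N:ℝ) * b 0 := h2

lemma nnnorm_le_nnnorm_of_nonneg {u v : ℝ} (h0 : 0 ≤ u) (h : u ≤ v) : ‖u‖₊ ≤ ‖v‖₊ := by
  rw [← NNReal.coe_le_coe, coe_nnnorm, coe_nnnorm, Real.norm_eq_abs, Real.norm_eq_abs,
    abs_of_nonneg h0, abs_of_nonneg (h0.trans h)]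
  exact h

/-- For a nonnegative `X` with support `(0, r)`, `0 < E[X] < ∞`, and
`α, β > 0` with `G_X(α, β) < ∞`,
`G_X(α, β) = ∑ₙ C(α, n) (-1)ⁿ (E[X])^(n+β) 𝒢ₑ(n+β)`, where
`𝒢ₑ(ν) = ∫_0^∞ ((1 - F x)/E[X])^ν dx` is the information generating function of the
equilibrium density. -/
theorem stmt13 (μ : Measure ℝ) [IsProbabilityMeasure μ]
    (hnn : μ (Iio 0) = 0)
    (hint : Integrable id μ) (hm : 0 < ∫ x, x ∂μ)
    (hF : ∀ x : ℝ, 0 < x → 0 < cdfOf μ x)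
    (α β : ℝ) (hα : 0 < α) (hβ : 0 < β) (hD : memD (cdfOf μ) α β) :
    cigf (cdfOf μ) α β =
      ∑' n : ℕ, genBinom α n * (-1) ^ n * (∫ x, x ∂μ) ^ ((n : ℝ) + β) *
        ∫ x in Ioi (0:ℝ), ((1 - cdfOf μ x) / ∫ y, y ∂μ) ^ ((n : ℝ) + β) := by
  set m : ℝ := ∫ x, x ∂μ with hmdef
  set F := cdfOf μ with hFdef
  have hFnn : ∀ x, 0 ≤ F x := fun x => ENNReal.toReal_nonneg
  have hF1 : ∀ x, F x ≤ 1 := by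
    intro x
    rw [hFdef, cdfOf]
    have h1 : μ (Iic x) ≤ 1 := prob_le_one
    calc (μ (Iic x)).toReal ≤ (1 : ℝ≥0∞).toReal := ENNReal.toReal_mono ENNReal.one_ne_top h1
      _ = 1 := by simp
  have hFmono : Monotone F := fun x y hxy =>
    ENNReal.toReal_mono (measure_ne_top μ _) (measure_mono (Iic_subset_Iic.mpr hxy))
  have hFmeas : Measurable F := hFmono.measurable
  have hgmeas : Measurable (fun x : ℝ => 1 - F x) := measurable_const.sub hFmeas
  have hgnn : ∀ x, 0 ≤ 1 - F x := fun x => by linarith [hF1 x]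
  have hg1 : ∀ x, 1 - F x ≤ 1 := fun x => by linarith [hFnn x]
  have hSmeas : MeasurableSet (cigfSupport F) := by
    have h : cigfSupport F = F ⁻¹' (Ioo 0 1) := rfl
    rw [h]; exact hFmeas measurableSet_Ioo
  have hφmeas : Measurable (fun x => F x ^ α * (1 - F x) ^ β) :=
    (hFmeas.pow measurable_const).mul (hgmeas.pow measurable_const)
  -- a point where F ≥ 1/2
  obtain ⟨x0, hx0half, hx0pos⟩ : ∃ x0 : ℝ, 1 / 2 ≤ F x0 ∧ 0 < x0 := by
    have h1 : Filter.Tendsto (fun x => μ (Iic x)) Filter.atTop (nhds (μ univ)) :=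
      tendsto_measure_Iic_atTop μ
    have h2 : Filter.Tendsto F Filter.atTop (nhds 1) := by
      rw [hFdef]
      have := (ENNReal.tendsto_toReal (measure_ne_top μ univ)).comp h1
      rw [measure_univ, ENNReal.toReal_one] at this
      exact this
    have h3 : ∀ᶠ x in Filter.atTop, 1 / 2 ≤ F x :=
      h2.eventually (eventually_ge_nhds (by norm_num))
    obtain ⟨x0, h4, h5⟩ := (h3.and (Filter.eventually_gt_atTop 0)).exists
    exact ⟨x0, h4, h5⟩
  -- integrability of (1-F)^β on (0,∞)
  have hgβmeas : Measurable (fun x : ℝ => (1 - F x) ^ β) := hgmeas.pow measurable_const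
  have hJ : IntegrableOn (fun x : ℝ => (1 - F x) ^ β) (Ioi 0) volume := by
    have hsplit : Ioi (0:ℝ) = Ioc 0 x0 ∪ Ioi x0 := (Ioc_union_Ioi_eq_Ioi hx0pos.le).symm
    rw [hsplit]
    apply IntegrableOn.union
    · apply Measure.integrableOn_of_bounded (M := 1)
      · rw [Real.volume_Ioc]; exact ENNReal.ofReal_ne_top
      · exact hgβmeas.aestronglyMeasurable
      · apply ae_of_all
        intro x
        rw [Real.norm_eq_abs, abs_of_nonneg (Real.rpow_nonneg (hgnn x) _)]
        exact Real.rpow_le_one (hgnn x) (hg1 x) hβ.le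
    · have hsub : IntegrableOn (fun x => F x ^ α * (1 - F x) ^ β)
          (Ioi x0 ∩ cigfSupport F) volume := hD.mono_set inter_subset_right
      have hzero : IntegrableOn (fun x => F x ^ α * (1 - F x) ^ β)
          (Ioi x0 \ cigfSupport F) volume := by
        apply IntegrableOn.congr_fun integrableOn_zero
          ?_ (measurableSet_Ioi.diff hSmeas)
        intro x hx
        have h1 : 0 < F x := lt_of_lt_of_le (by norm_num) ((hx0half).trans (hFmono hx.1.le))
        have h2 : ¬(0 < F x ∧ F x < 1) := hx.2
        have h4 := hF1 x
        have hx1 : F x = 1 := by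
          by_contra h
          exact h2 ⟨h1, lt_of_le_of_ne h4 h⟩
        simp [hx1, Real.zero_rpow hβ.ne']
      have hφint : IntegrableOn (fun x => F x ^ α * (1 - F x) ^ β) (Ioi x0) volume := by
        have h := hsub.union hzero
        rwa [inter_union_diff] at h
      apply Integrable.mono (hφint.const_mul ((2:ℝ) ^ α))
      · exact hgβmeas.aestronglyMeasurable.restrict
      · rw [ae_restrict_iff' measurableSet_Ioi]
        apply ae_of_all
        intro x hx
        have hFx : (1:ℝ)/2 ≤ F x := hx0half.trans (hFmono (le_of_lt hx))
        have h1 : (1:ℝ) ≤ 2 ^ α * F x ^ α := by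
          have h2 : ((1:ℝ)/2) ^ α ≤ F x ^ α :=
            Real.rpow_le_rpow (by norm_num) hFx hα.le
          calc (1:ℝ) = 2 ^ α * ((1:ℝ)/2) ^ α := by
                rw [← Real.mul_rpow (by norm_num) (by norm_num)]
                norm_num
            _ ≤ 2 ^ α * F x ^ α := by
                exact mul_le_mul_of_nonneg_left h2 (Real.rpow_nonneg (by norm_num) _)
        have hnn1 : (0:ℝ) ≤ (1 - F x) ^ β := Real.rpow_nonneg (hgnn x) _
        have hnn2 : (0:ℝ) ≤ F x ^ α := Real.rpow_nonneg (hFnn x) _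
        rw [Real.norm_eq_abs, Real.norm_eq_abs, abs_of_nonneg hnn1,
          abs_of_nonneg (by positivity : (0:ℝ) ≤ 2 ^ α * (F x ^ α * (1 - F x) ^ β))]
        calc (1 - F x) ^ β = 1 * (1 - F x) ^ β := by ring
          _ ≤ (2 ^ α * F x ^ α) * (1 - F x) ^ β := mul_le_mul_of_nonneg_right h1 hnn1
          _ = 2 ^ α * (F x ^ α * (1 - F x) ^ β) := by ring
  -- series terms
  set c : ℕ → ℝ := fun n => genBinom α n * (-1) ^ n with hc
  set f : ℕ → ℝ → ℝ := fun n x => c n * (1 - F x) ^ ((n : ℝ) + β) with hf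
  have hfmeas : ∀ n, Measurable (f n) := fun n => (hgmeas.pow measurable_const).const_mul _
  have hpt : ∀ x ∈ Ioi (0:ℝ), HasSum (fun n => f n x) (F x ^ α * (1 - F x) ^ β) := by
    intro x hx
    have h0F : 0 < F x := hF x hx
    have hF1x : F x ≤ 1 := hF1 x
    have ht : |F x - 1| < 1 := abs_lt.mpr ⟨by linarith, by linarith⟩
    have hbs := (hasSum_genBinom α ht).mul_right ((1 - F x) ^ β)
    have he : (fun n : ℕ => genBinom α n * (F x - 1) ^ n * (1 - F x) ^ β) = fun n => f n x := by
      funext n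
      have h2 : (1 - F x) ^ ((n : ℝ) + β) = (1 - F x) ^ (n : ℕ) * (1 - F x) ^ β := by
        rw [Real.rpow_add' (hgnn x) (by positivity), Real.rpow_natCast]
      have h1 : (F x - 1 : ℝ) ^ n = (-1) ^ n * (1 - F x) ^ n := by
        rw [show (F x - 1 : ℝ) = -1 * (1 - F x) by ring, mul_pow]
      show genBinom α n * (F x - 1) ^ n * (1 - F x) ^ β
          = genBinom α n * (-1) ^ n * (1 - F x) ^ ((n : ℝ) + β)
      rw [h1, h2]
      ring
    rw [he] at hbs
    rwa [show (1 + (F x - 1) : ℝ) = F x by ring] at hbs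
  -- LHS as integral over Ioi 0
  have hae0 : ∀ᵐ x : ℝ, x ≠ (0:ℝ) := by
    rw [ae_iff]
    have h : {x : ℝ | ¬x ≠ 0} = {0} := by ext x; simp
    rw [h]
    exact Real.volume_singleton
  have hLHS : cigf F α β = ∫ x in Ioi (0:ℝ), F x ^ α * (1 - F x) ^ β := by
    rw [cigf, ← integral_indicator hSmeas, ← integral_indicator measurableSet_Ioi]
    apply integral_congr_ae
    filter_upwards [hae0] with x hx0
    by_cases hx : 0 < x
    · by_cases hxS : x ∈ cigfSupport F
      · rw [indicator_of_mem hxS, indicator_of_mem (mem_Ioi.mpr hx)]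
      · rw [indicator_of_notMem hxS, indicator_of_mem (mem_Ioi.mpr hx)]
        have h2 : ¬(0 < F x ∧ F x < 1) := hxS
        have h3 := hF x hx
        have h4 := hF1 x
        have hx1 : F x = 1 := by
          by_contra h
          exact h2 ⟨h3, lt_of_le_of_ne h4 h⟩
        simp [hx1, Real.zero_rpow hβ.ne']
    · have hxneg : x < 0 := lt_of_le_of_ne (not_lt.mp hx) hx0
      have hFx0 : F x = 0 := by
        rw [hFdef, cdfOf]
        have h : μ (Iic x) = 0 := measure_mono_null (fun y hy => lt_of_le_of_lt hy hxneg) hnn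
        simp [h]
      have h1 : x ∉ cigfSupport F := fun h => by
        have := h.1; rw [hFx0] at this; exact lt_irrefl 0 this
      have h2 : x ∉ Ioi (0:ℝ) := fun h => hx h
      rw [indicator_of_notMem h1, indicator_of_notMem h2]
  -- summability of lintegrals
  have hcabs : ∀ n, |c n| = |genBinom α n| := by
    intro n
    rw [hc]
    simp [abs_mul]
  have hcsum : Summable (fun n => ‖c n‖₊) := by
    rw [← NNReal.summable_coe]
    have he : (fun n => ((‖c n‖₊ : ℝ))) = fun n => |genBinom α n| := by
      funext n; rw [coe_nnnorm, Real.norm_eq_abs, hcabs]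
    rw [he]
    exact summable_abs_genBinom hα
  have hbound : ∑' n, ∫⁻ x in Ioi (0:ℝ), ‖f n x‖₊ ∂volume ≠ ∞ := by
    set J : ℝ≥0∞ := ∫⁻ x in Ioi (0:ℝ), ‖(1 - F x) ^ β‖₊ ∂volume with hJdef
    have hJlt : J < ∞ := hJ.2
    have hterm : ∀ n, ∫⁻ x in Ioi (0:ℝ), ‖f n x‖₊ ∂volume ≤ (‖c n‖₊ : ℝ≥0∞) * J := by
      intro n
      have h1 : ∀ x : ℝ, (‖f n x‖₊ : ℝ≥0∞)
          = (‖c n‖₊ : ℝ≥0∞) * ‖(1 - F x) ^ ((n:ℝ) + β)‖₊ := by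
        intro x
        rw [hf]
        show ((‖c n * (1 - F x) ^ ((n:ℝ) + β)‖₊ : ℝ≥0) : ℝ≥0∞) = _
        rw [nnnorm_mul, ENNReal.coe_mul]
      calc ∫⁻ x in Ioi (0:ℝ), ‖f n x‖₊ ∂volume
          = ∫⁻ x in Ioi (0:ℝ), (‖c n‖₊ : ℝ≥0∞) * ‖(1 - F x) ^ ((n:ℝ) + β)‖₊ ∂volume :=
            lintegral_congr h1
        _ = (‖c n‖₊ : ℝ≥0∞) * ∫⁻ x in Ioi (0:ℝ), ‖(1 - F x) ^ ((n:ℝ) + β)‖₊ ∂volume :=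
            lintegral_const_mul _ ((hgmeas.pow measurable_const).nnnorm.coe_nnreal_ennreal)
        _ ≤ (‖c n‖₊ : ℝ≥0∞) * J := by
            apply mul_le_mul_right
            apply lintegral_mono
            intro x
            have hle : (1 - F x) ^ ((n:ℝ) + β) ≤ (1 - F x) ^ β :=
              Real.rpow_le_rpow_of_exponent_ge' (hgnn x) (hg1 x) hβ.le
                (le_add_of_nonneg_left (Nat.cast_nonneg n))
            exact ENNReal.coe_le_coe.mpr
              (nnnorm_le_nnnorm_of_nonneg (Real.rpow_nonneg (hgnn x) _) hle)
    have h2 : ∑' n, ∫⁻ x in Ioi (0:ℝ), ‖f n x‖₊ ∂volume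
        ≤ (∑' n, (‖c n‖₊ : ℝ≥0∞)) * J := by
      calc ∑' n, ∫⁻ x in Ioi (0:ℝ), ‖f n x‖₊ ∂volume
          ≤ ∑' n, (‖c n‖₊ : ℝ≥0∞) * J := ENNReal.tsum_le_tsum hterm
        _ = (∑' n, (‖c n‖₊ : ℝ≥0∞)) * J := ENNReal.tsum_mul_right
    have h3 : (∑' n, (‖c n‖₊ : ℝ≥0∞)) * J < ∞ :=
      ENNReal.mul_lt_top
        (lt_of_le_of_ne le_top (ENNReal.tsum_coe_ne_top_iff_summable.mpr hcsum)) hJlt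
    exact (lt_of_le_of_lt h2 h3).ne
  have hexch := integral_tsum (μ := volume.restrict (Ioi (0:ℝ)))
    (fun n => (hfmeas n).aestronglyMeasurable) hbound
  have hsum_eq : ∫ x in Ioi (0:ℝ), F x ^ α * (1 - F x) ^ β
      = ∑' n, ∫ x in Ioi (0:ℝ), f n x := by
    rw [← hexch]
    apply setIntegral_congr_fun measurableSet_Ioi
    intro x hx
    exact ((hpt x hx).tsum_eq).symm
  have hterm_eq : ∀ n : ℕ,
      genBinom α n * (-1) ^ n * m ^ ((n:ℝ) + β)
        * ∫ x in Ioi (0:ℝ), ((1 - F x) / m) ^ ((n:ℝ) + β)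
      = ∫ x in Ioi (0:ℝ), f n x := by
    intro n
    have hp : (0:ℝ) < m ^ ((n:ℝ) + β) := Real.rpow_pos_of_pos hm _
    have h2 : ∫ x in Ioi (0:ℝ), ((1 - F x) / m) ^ ((n:ℝ) + β)
        = (∫ x in Ioi (0:ℝ), (1 - F x) ^ ((n:ℝ) + β)) / m ^ ((n:ℝ) + β) := by
      simp_rw [Real.div_rpow (hgnn _) hm.le]
      exact integral_div _ _
    have h3 : ∫ x in Ioi (0:ℝ), f n x = c n * ∫ x in Ioi (0:ℝ), (1 - F x) ^ ((n:ℝ) + β) := by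
      rw [hf]
      exact integral_const_mul _ _
    rw [h2, h3, hc]
    field_simp
  rw [hLHS, hsum_eq]
  exact tsum_congr fun n => (hterm_eq n).symm
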